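/- Fix integers p ≥ k ≥ 1 and let q = floor(k²/p). For any integer ℓ with q ≤ ℓ ≤ k and p ≥ 4k, and any integer m with q ≤ m ≤ ℓ - 1, the ratio (binom(k,m+1)·binom(p-k,k-m-1)) / (binom(k,m)·binom(p-k,k-m)) is at most 2(q+1)/(m+1). -/
import Mathlib


/-- Fix integers `p ≥ k ≥ 1` and let `q = ⌊k²/p⌋`. For any integer `ℓ` with
`q ≤ ℓ ≤ k` and `p ≥ 4k`, and any integer `m` with `q ≤ m ≤ ℓ - 1`, the ratio
`(binom(k,m+1)·binom(p-k,k-m-1)) / (binom(k,m)·binom(p-k,k-m))` is at most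
`2(q+1)/(m+1)`. -/
theorem stmt_13 (p k ℓ m : ℕ) (hk : 1 ≤ k) (hkp : k ≤ p) (h4 : 4 * k ≤ p)
    (hqℓ : k ^ 2 / p ≤ ℓ) (hℓk : ℓ ≤ k) (hqm : k ^ 2 / p ≤ m) (hm : m + 1 ≤ ℓ) :
    ((k.choose (m + 1) : ℝ) * ((p - k).choose (k - m - 1) : ℝ)) /
        ((k.choose m : ℝ) * ((p - k).choose (k - m) : ℝ))
      ≤ 2 * ((k ^ 2 / p : ℕ) + 1 : ℝ) / ((m : ℝ) + 1) := by
  set q := k ^ 2 / p with hq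
  have hmk : m < k := by omega
  have hC1 : 0 < k.choose m := Nat.choose_pos (le_of_lt hmk)
  have hC2 : 0 < (p - k).choose (k - m) := Nat.choose_pos (by omega)
  -- key choose identities
  have key1 : k.choose (m + 1) * (m + 1) = k.choose m * (k - m) :=
    Nat.choose_succ_right_eq k m
  have e1 : k - m - 1 + 1 = k - m := by omega
  have e2 : p - k - (k - m - 1) = p - 2 * k + m + 1 := by omega
  have key2 : (p - k).choose (k - m) * (k - m)
      = (p - k).choose (k - m - 1) * (p - 2 * k + m + 1) := by
    have := Nat.choose_succ_right_eq (p - k) (k - m - 1)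
    rw [e1, e2] at this
    exact this
  -- the numeric inequality
  have hq1 : k ^ 2 < (q + 1) * p := by
    have h1 := Nat.lt_mul_div_succ (k ^ 2) (show 0 < p by omega)
    rw [Nat.mul_comm] at h1
    exact h1
  have hineq : (k - m) ^ 2 ≤ 2 * (q + 1) * (p - 2 * k + m + 1) := le_of_lt <| calc
    (k - m) ^ 2 ≤ k ^ 2 := Nat.pow_le_pow_left (Nat.sub_le k m) 2
    _ < (q + 1) * p := hq1
    _ ≤ (q + 1) * (2 * (p - 2 * k + m + 1)) :=
        Nat.mul_le_mul_left _ (by omega)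
    _ = 2 * (q + 1) * (p - 2 * k + m + 1) := by ring
  -- main nat inequality
  have main : k.choose (m + 1) * (p - k).choose (k - m - 1) * (m + 1)
      ≤ 2 * (q + 1) * (k.choose m * (p - k).choose (k - m)) := by
    have hDpos : 0 < p - 2 * k + m + 1 := by omega
    apply Nat.le_of_mul_le_mul_right _ hDpos
    calc k.choose (m + 1) * (p - k).choose (k - m - 1) * (m + 1) * (p - 2 * k + m + 1)
        = (k.choose (m + 1) * (m + 1)) * ((p - k).choose (k - m - 1) * (p - 2 * k + m + 1)) := by
          ring
      _ = (k.choose m * (k - m)) * ((p - k).choose (k - m) * (k - m)) := by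
          rw [key1, ← key2]
      _ = (k.choose m * (p - k).choose (k - m)) * (k - m) ^ 2 := by ring
      _ ≤ (k.choose m * (p - k).choose (k - m)) * (2 * (q + 1) * (p - 2 * k + m + 1)) :=
          Nat.mul_le_mul_left _ hineq
      _ = 2 * (q + 1) * (k.choose m * (p - k).choose (k - m)) * (p - 2 * k + m + 1) := by ring
  -- transfer to ℝ
  have hpos : (0 : ℝ) < (k.choose m : ℝ) * ((p - k).choose (k - m) : ℝ) := by
    positivity
  have hm1pos : (0 : ℝ) < (m : ℝ) + 1 := by positivity
  rw [div_le_div_iff₀ hpos hm1pos]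
  have := (Nat.cast_le (α := ℝ)).2 main
  push_cast at this
  linarith
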